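/- The set of formulas {size ≥ β | β ∈ ℕ} is unsatisfiable (since heaps have finite domains), yet every finite subset of it is satisfiable. Consequently, the semantic entailment relation of quantifier-free separation logic is not compact. -/

import Mathlib

abbrev Var := ℕ
abbrev Loc := ℕ
abbrev Heap := Finmap (fun _ : Loc => Loc)
abbrev Store := Var → Loc

def SLProp := Store → Heap → Prop

def star (P Q : SLProp) : SLProp := fun s h =>
  ∃ h₁ h₂ : Heap, Finmap.Disjoint h₁ h₂ ∧ h₁ ∪ h₂ = h ∧ P s h₁ ∧ Q s h₂

def wand (P Q : SLProp) : SLProp := fun s h =>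
  ∀ h' : Heap, Finmap.Disjoint h' h → P s h' → Q s (h ∪ h')

def septraction (P Q : SLProp) : SLProp := fun s h =>
  ∃ h' : Heap, Finmap.Disjoint h h' ∧ P s h' ∧ Q s (h ∪ h')


lemma exists_heap_keys (n : ℕ) : ∃ h : Heap, h.keys = Finset.range n := by
  induction n with
  | zero => exact ⟨∅, by simp⟩
  | succ n ih =>
    obtain ⟨h, hk⟩ := ih
    refine ⟨h.insert n 0, ?_⟩
    ext k
    rw [Finmap.mem_keys, Finmap.mem_insert, ← Finmap.mem_keys, hk]
    simp [Nat.lt_succ_iff_lt_or_eq, or_comm]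
    exact ⟨fun h => h.elim (fun e => e ▸ le_refl _) (fun l => le_of_lt l), fun h => Nat.eq_or_lt_of_le h⟩

/-- {size ≥ β | β ∈ ℕ} is unsatisfiable, but every finite subset of it is
satisfiable (failure of compactness). -/
theorem stmt_9 :
    (¬ ∃ (s : Store) (h : Heap), ∀ β : ℕ, β ≤ (Finmap.keys h).card) ∧
    (∀ Γ : Finset ℕ, ∃ (s : Store) (h : Heap), ∀ β ∈ Γ, β ≤ (Finmap.keys h).card) := by
  constructor
  · rintro ⟨s, h, hall⟩
    exact absurd (hall (h.keys.card + 1)) (by omega)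
  · intro Γ
    obtain ⟨h, hk⟩ := exists_heap_keys (Γ.sup id)
    refine ⟨fun _ => 0, h, fun β hβ => ?_⟩
    rw [hk, Finset.card_range]
    exact Finset.le_sup (f := id) hβ
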